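/- For every k ≥ 1, a Sylow 2-subgroup of the alternating group A_{4k+2} is isomorphic (as a group) to a Sylow 2-subgroup of the symmetric group S_{4k}. -/

import Mathlib

open Equiv Equiv.Perm

namespace Stmt9Aux

variable (n : ℕ)

/-- The inclusion `Fin n ↪ Fin (n + 2)`. -/
def ι : Fin n ↪ Fin (n + 2) :=
  ⟨fun x => ⟨x.1, by omega⟩, fun x y h => by simpa [Fin.ext_iff] using h⟩

def pa : Fin (n + 2) := ⟨n, by omega⟩
def pb : Fin (n + 2) := ⟨n + 1, by omega⟩

lemma pa_ne_pb : pa n ≠ pb n := by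
  simp [pa, pb, Fin.ext_iff]

lemma not_mem_range {z : Fin (n + 2)} (hz : n ≤ z.1) : z ∉ Set.range (ι n) := by
  rintro ⟨x, rfl⟩
  simp only [ι, Function.Embedding.coeFn_mk] at hz
  exact absurd x.2 (by change n ≤ x.1 at hz; omega)

lemma via_pa (σ : Perm (Fin n)) : σ.viaEmbedding (ι n) (pa n) = pa n :=
  viaEmbedding_apply_of_notMem σ (ι n) _ (not_mem_range n le_rfl)

lemma via_pb (σ : Perm (Fin n)) : σ.viaEmbedding (ι n) (pb n) = pb n :=
  viaEmbedding_apply_of_notMem σ (ι n) _ (not_mem_range n (by simp [pb]))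

lemma commute_swap (τ : Perm (Fin n)) :
    Commute (swap (pa n) (pb n)) (τ.viaEmbedding (ι n)) := by
  apply Equiv.Perm.Disjoint.commute
  intro x
  by_cases hx : x = pa n ∨ x = pb n
  · right
    rcases hx with rfl | rfl
    · exact via_pa n τ
    · exact via_pb n τ
  · left
    push_neg at hx
    exact swap_apply_of_ne_of_ne hx.1 hx.2

lemma via_mul (σ τ : Perm (Fin n)) :
    (σ * τ).viaEmbedding (ι n) = σ.viaEmbedding (ι n) * τ.viaEmbedding (ι n) := by
  rw [← viaEmbeddingHom_apply, ← viaEmbeddingHom_apply, ← viaEmbeddingHom_apply, map_mul]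

lemma sign_via (σ : Perm (Fin n)) : sign (σ.viaEmbedding (ι n)) = sign σ := by
  have h := sign_extendDomain (p := (· ∈ Set.range ⇑(ι n))) σ
    (ofInjective (ι n).1 (ι n).2)
  convert h using 2
  unfold viaEmbedding
  congr!

/-- The embedding `S_n → S_{n+2}` landing in even permutations. -/
noncomputable def f : Perm (Fin n) →* Perm (Fin (n + 2)) where
  toFun σ := σ.viaEmbedding (ι n) * (if sign σ = 1 then 1 else swap (pa n) (pb n))
  map_one' := by
    simp [← viaEmbeddingHom_apply, map_one]
  map_mul' σ τ := by
    have hc := (commute_swap n τ).eq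
    rcases Int.units_eq_one_or (sign σ) with hσ | hσ <;>
      rcases Int.units_eq_one_or (sign τ) with hτ | hτ <;>
        simp only [map_mul, hσ, hτ, if_pos, if_neg, mul_one, one_mul,
          neg_mul, mul_neg, neg_neg, via_mul] <;>
        simp only [show ((-1 : ℤˣ) ≠ 1) from by decide, if_false, if_true, mul_one,
          reduceIte] <;>
        rw [mul_assoc]
    · rw [← hc, mul_assoc]
    · rw [← mul_assoc (swap (pa n) (pb n)), hc, mul_assoc, swap_mul_self, mul_one]

lemma f_apply (σ : Perm (Fin n)) :
    f n σ = σ.viaEmbedding (ι n) * (if sign σ = 1 then 1 else swap (pa n) (pb n)) := rfl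

lemma sign_f (σ : Perm (Fin n)) : sign (f n σ) = 1 := by
  rw [f_apply, map_mul, sign_via]
  rcases Int.units_eq_one_or (sign σ) with hσ | hσ <;>
    simp [hσ, sign_swap (pa_ne_pb n)]

lemma f_apply_pa (σ : Perm (Fin n)) :
    f n σ (pa n) = if sign σ = 1 then pa n else pb n := by
  rw [f_apply]
  rcases Int.units_eq_one_or (sign σ) with hσ | hσ <;> simp [hσ, via_pa, via_pb]

lemma f_inj : Function.Injective (f n) := by
  intro σ τ h
  have ha : (if sign σ = 1 then pa n else pb n) = (if sign τ = 1 then pa n else pb n) := by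
    rw [← f_apply_pa, ← f_apply_pa, h]
  have hsign : sign σ = sign τ := by
    rcases Int.units_eq_one_or (sign σ) with hσ | hσ <;>
      rcases Int.units_eq_one_or (sign τ) with hτ | hτ <;>
        simp [hσ, hτ] at ha ⊢ <;>
        exact absurd ha (by first | exact pa_ne_pb n | exact (pa_ne_pb n).symm)
  rw [f_apply, f_apply, hsign] at h
  have h2 : σ.viaEmbedding (ι n) = τ.viaEmbedding (ι n) := mul_right_cancel h
  exact viaEmbeddingHom_injective (ι n) h2

/-- `f` corestricted to the alternating group. -/
noncomputable def F : Perm (Fin n) →* alternatingGroup (Fin (n + 2)) :=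
  (f n).codRestrict _ (fun σ => mem_alternatingGroup.mpr (sign_f n σ))

lemma F_inj : Function.Injective (F n) := by
  intro σ τ h
  exact f_inj n (congrArg Subtype.val h)

lemma odd_fact {m : ℕ} (hm : ¬ 2 ∣ m) : m.factorization 2 = 0 :=
  Nat.factorization_eq_zero_of_not_dvd hm

lemma card_fact (k : ℕ) :
    (Nat.card (alternatingGroup (Fin (4 * k + 2)))).factorization 2 =
      (Nat.card (Perm (Fin (4 * k)))).factorization 2 := by
  have hA : 2 * Nat.card (alternatingGroup (Fin (4 * k + 2))) = (4 * k + 2).factorial := by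
    rw [Nat.card_eq_fintype_card, two_mul_card_alternatingGroup, Fintype.card_perm,
      Fintype.card_fin]
  have hG : Nat.card (Perm (Fin (4 * k))) = (4 * k).factorial := by
    rw [Nat.card_eq_fintype_card, Fintype.card_perm, Fintype.card_fin]
  have hfac : (4 * k + 2).factorial = (4 * k + 2) * ((4 * k + 1) * (4 * k).factorial) := by
    rw [show 4 * k + 2 = (4 * k + 1) + 1 from rfl, Nat.factorial_succ, Nat.factorial_succ]
  have hApos : Nat.card (alternatingGroup (Fin (4 * k + 2))) ≠ 0 := Nat.card_pos.ne'
  have key : ((4 * k + 2).factorial).factorization 2 = ((4 * k).factorial).factorization 2 + 1 := by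
    rw [hfac, Nat.factorization_mul (by omega) (by positivity),
      Nat.factorization_mul (by omega) (Nat.factorial_ne_zero _)]
    have h1 : (4 * k + 2).factorization 2 = 1 := by
      rw [show 4 * k + 2 = 2 * (2 * k + 1) by ring,
        Nat.factorization_mul (by omega) (by omega)]
      simp [Finsupp.add_apply, Nat.Prime.factorization_self Nat.prime_two,
        odd_fact (m := 2 * k + 1) (by omega)]
    have h2 : (4 * k + 1).factorization 2 = 0 := odd_fact (by omega)
    simp [Finsupp.add_apply, h1, h2]
    omega
  have := congrArg (fun m => m.factorization 2) hA
  simp only [Nat.factorization_mul (by norm_num : (2:ℕ) ≠ 0) hApos, Finsupp.coe_add,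
    Pi.add_apply, Nat.Prime.factorization_self Nat.prime_two, key] at this
  rw [hG]
  omega

end Stmt9Aux

/-- For every `k ≥ 1`, a Sylow 2-subgroup of the alternating group `A_{4k+2}` is
isomorphic to a Sylow 2-subgroup of the symmetric group `S_{4k}`. -/
theorem stmt_9 (k : ℕ) (hk : 1 ≤ k)
    (P : Sylow 2 (alternatingGroup (Fin (4 * k + 2))))
    (Q : Sylow 2 (Equiv.Perm (Fin (4 * k)))) :
    Nonempty (↥P ≃* ↥Q) := by
  classical
  have hinj : Function.Injective (Stmt9Aux.F (4 * k)) := Stmt9Aux.F_inj (4 * k)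
  have e1 : Q.toSubgroup ≃* Subgroup.map (Stmt9Aux.F (4 * k)) Q.toSubgroup :=
    Subgroup.equivMapOfInjective _ _ hinj
  have hcard : Nat.card (Subgroup.map (Stmt9Aux.F (4 * k)) Q.toSubgroup) =
      2 ^ (Nat.card (alternatingGroup (Fin (4 * k + 2)))).factorization 2 := by
    rw [← Nat.card_congr e1.toEquiv, Sylow.card_eq_multiplicity, Stmt9Aux.card_fact]
  let Q' : Sylow 2 (alternatingGroup (Fin (4 * k + 2))) := Sylow.ofCard _ hcard
  exact ⟨(Sylow.equiv P Q').trans e1.symm⟩
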